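/- arXiv:2411.10859 — 5 statements merged into one kernel-verified Lean document; each statement's English description precedes it below -/
import Mathlib

section
/- Let 1 < n < b be natural numbers and let (d_k, d_{k-1}, ..., d_0)_b be an (n,b,σ)-permutiple. For 0 ≤ j ≤ k+1 set S_j = n·Σ_{i=0}^{j-1} d_{σ(i)}·b^i − Σ_{i=0}^{j-1} d_i·b^i. Then for every 0 ≤ j ≤ k+1 the power b^j divides S_j (so the j-th carry c_j := S_j / b^j is a well-defined integer, with c_0 = 0), and b·c_{j+1} − c_j = n·d_{σ(j)} − d_j for all 0 ≤ j ≤ k. -/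
/-- The integer `S_j = n·Σ_{i=0}^{j-1} d_{σ(i)}·b^i − Σ_{i=0}^{j-1} d_i·b^i`. -/
def permS (n b : ℕ) {k : ℕ} (d : Fin (k + 1) → ℕ) (σ : Equiv.Perm (Fin (k + 1)))
    (j : ℕ) : ℤ :=
  (n : ℤ) * ∑ i ∈ Finset.univ.filter (fun i : Fin (k + 1) => (i : ℕ) < j),
      (d (σ i) : ℤ) * (b : ℤ) ^ (i : ℕ)
    - ∑ i ∈ Finset.univ.filter (fun i : Fin (k + 1) => (i : ℕ) < j),
      (d i : ℤ) * (b : ℤ) ^ (i : ℕ)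

/-- The `j`-th carry `c_j = S_j / b^j`. -/
def carry (n b : ℕ) {k : ℕ} (d : Fin (k + 1) → ℕ) (σ : Equiv.Perm (Fin (k + 1)))
    (j : ℕ) : ℤ :=
  permS n b d σ j / (b : ℤ) ^ j

lemma permS_step (n b : ℕ) {k : ℕ} (d : Fin (k + 1) → ℕ) (σ : Equiv.Perm (Fin (k + 1)))
    (j : ℕ) (hj : j < k + 1) :
    permS n b d σ (j + 1)
      = permS n b d σ j + ((n : ℤ) * d (σ ⟨j, hj⟩) - d ⟨j, hj⟩) * (b : ℤ) ^ j := by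
  unfold permS
  have hset : Finset.univ.filter (fun i : Fin (k + 1) => (i : ℕ) < j + 1)
      = insert ⟨j, hj⟩ (Finset.univ.filter (fun i : Fin (k + 1) => (i : ℕ) < j)) := by
    ext i
    simp only [Finset.mem_filter, Finset.mem_univ, true_and, Finset.mem_insert, Fin.ext_iff]
    omega
  have hnot : (⟨j, hj⟩ : Fin (k + 1)) ∉
      Finset.univ.filter (fun i : Fin (k + 1) => (i : ℕ) < j) := by simp
  rw [hset, Finset.sum_insert hnot, Finset.sum_insert hnot]
  ring

lemma permS_zero (n b : ℕ) {k : ℕ} (d : Fin (k + 1) → ℕ) (σ : Equiv.Perm (Fin (k + 1))) :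
    permS n b d σ 0 = 0 := by
  unfold permS
  simp

theorem carries_well_defined_and_recurrence
    (n b k : ℕ) (hn : 1 < n) (hnb : n < b)
    (d : Fin (k + 1) → ℕ) (hd : ∀ j, d j < b)
    (σ : Equiv.Perm (Fin (k + 1)))
    (hperm : ∑ j : Fin (k + 1), d j * b ^ (j : ℕ)
      = n * ∑ j : Fin (k + 1), d (σ j) * b ^ (j : ℕ)) :
    (∀ j ≤ k + 1, (b : ℤ) ^ j ∣ permS n b d σ j) ∧
    carry n b d σ 0 = 0 ∧
    (∀ j, (hj : j ≤ k) →
      (b : ℤ) * carry n b d σ (j + 1) - carry n b d σ j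
        = (n : ℤ) * d (σ ⟨j, Nat.lt_succ_of_le hj⟩) - d ⟨j, Nat.lt_succ_of_le hj⟩) := by
  have hbpos : 0 < b := by omega
  have hb0 : (b : ℤ) ≠ 0 := by exact_mod_cast hbpos.ne'
  have htop : permS n b d σ (k + 1) = 0 := by
    unfold permS
    have hfil : Finset.univ.filter (fun i : Fin (k + 1) => (i : ℕ) < k + 1)
        = Finset.univ := by
      ext i; simp [i.isLt, Nat.lt_succ_iff.mp i.isLt]
    rw [hfil]
    have h := congrArg (Nat.cast : ℕ → ℤ) hperm
    push_cast at h
    linarith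
  have hdvd' : ∀ t, t ≤ k + 1 → (b : ℤ) ^ (k + 1 - t) ∣ permS n b d σ (k + 1 - t) := by
    intro t
    induction t with
    | zero => intro _; simp [htop]
    | succ t ih =>
      intro ht
      have h1 := ih (by omega)
      have hjk : k + 1 - (t + 1) < k + 1 := by omega
      have hstep := permS_step n b d σ (k + 1 - (t + 1)) hjk
      have heq : k + 1 - (t + 1) + 1 = k + 1 - t := by omega
      rw [heq] at hstep
      have hrw : permS n b d σ (k + 1 - (t + 1))
          = permS n b d σ (k + 1 - t)
            - ((n : ℤ) * d (σ ⟨k + 1 - (t + 1), hjk⟩) - d ⟨k + 1 - (t + 1), hjk⟩)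
              * (b : ℤ) ^ (k + 1 - (t + 1)) := by linarith
      rw [hrw]
      exact dvd_sub (dvd_trans (pow_dvd_pow _ (by omega)) h1) (dvd_mul_left _ _)
  have hdvd : ∀ j ≤ k + 1, (b : ℤ) ^ j ∣ permS n b d σ j := by
    intro j hj
    have := hdvd' (k + 1 - j) (by omega)
    rwa [show k + 1 - (k + 1 - j) = j by omega] at this
  refine ⟨hdvd, ?_, ?_⟩
  · unfold carry
    simp [permS_zero]
  · intro j hj
    obtain ⟨c1, hc1⟩ := hdvd (j + 1) (by omega)
    obtain ⟨c0, hc0⟩ := hdvd j (by omega)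
    have hbj : (b : ℤ) ^ j ≠ 0 := pow_ne_zero _ hb0
    have hbj1 : (b : ℤ) ^ (j + 1) ≠ 0 := pow_ne_zero _ hb0
    have hcar1 : carry n b d σ (j + 1) = c1 := by
      rw [carry, hc1, Int.mul_ediv_cancel_left _ hbj1]
    have hcar0 : carry n b d σ j = c0 := by
      rw [carry, hc0, Int.mul_ediv_cancel_left _ hbj]
    have hstep := permS_step n b d σ j (Nat.lt_succ_of_le hj)
    rw [hc1, hc0] at hstep
    have hkey : (b : ℤ) * c1
        = c0 + ((n : ℤ) * d (σ ⟨j, Nat.lt_succ_of_le hj⟩) - d ⟨j, Nat.lt_succ_of_le hj⟩) := by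
      apply mul_left_cancel₀ hbj
      rw [pow_succ] at hstep
      linarith
    rw [hcar1, hcar0]
    linarith
end

section
/- Let 1 < n < b be natural numbers. For every fixed digit d_1 with 0 ≤ d_1 < b, the number of digits d_2 with 0 ≤ d_2 < b satisfying (d_1 + (b − n)·d_2) mod b ≤ n − 1 is exactly n. In other words, every vertex of the (n,b)-mother graph has outdegree n. -/
theorem mother_graph_outdegree
    (n b : ℕ) (hn : 1 < n) (hnb : n < b) :
    ∀ d₁ < b,
      ((Finset.range b).filter
        (fun d₂ => (d₁ + (b - n) * d₂) % b ≤ n - 1)).card = n := by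
  intro d₁ hd₁
  have hn0 : 0 < n := by omega
  have hb0 : 0 < b := by omega
  have key : ((Finset.range b).filter
        (fun d₂ => (d₁ + (b - n) * d₂) % b ≤ n - 1)) =
      (Finset.range n).image (fun k => (d₁ + k * b) / n) := by
    ext d₂
    simp only [Finset.mem_filter, Finset.mem_image, Finset.mem_range]
    constructor
    · rintro ⟨hd₂, hr⟩
      have hq := Nat.div_add_mod (d₁ + (b - n) * d₂) b
      set q := (d₁ + (b - n) * d₂) / b with hqdef
      set r := (d₁ + (b - n) * d₂) % b with hrdef
      have hrn : r < n := by omega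
      have h1 : (b - n) * d₂ + n * d₂ = b * d₂ := by
        rw [← Nat.add_mul, Nat.sub_add_cancel hnb.le]
      have hqd : q ≤ d₂ := by nlinarith
      have h2 : (d₂ - q) * b + q * b = d₂ * b := by
        rw [← Nat.add_mul, Nat.sub_add_cancel hqd]
      have h3 : b * q = q * b := mul_comm _ _
      have h4 : b * d₂ = d₂ * b := mul_comm _ _
      have hk : d₁ + (d₂ - q) * b = n * d₂ + r := by linarith
      refine ⟨d₂ - q, ?_, ?_⟩
      · have hlt : (d₂ - q) * b < n * b := by nlinarith
        exact Nat.lt_of_mul_lt_mul_right hlt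
      · rw [hk, Nat.mul_add_div hn0, Nat.div_eq_of_lt hrn, add_zero]
    · rintro ⟨k, hk, rfl⟩
      have hdm := Nat.div_add_mod (d₁ + k * b) n
      set d₂ := (d₁ + k * b) / n with hd2def
      set r := (d₁ + k * b) % n with hrdef
      have hrn : r < n := Nat.mod_lt _ hn0
      have hd₂b : d₂ < b := by
        have : n * d₂ < n * b := by nlinarith
        exact Nat.lt_of_mul_lt_mul_left this
      have hkd : k ≤ d₂ := by nlinarith
      have h1 : (b - n) * d₂ + n * d₂ = b * d₂ := by
        rw [← Nat.add_mul, Nat.sub_add_cancel hnb.le]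
      have h2 : (d₂ - k) + k = d₂ := Nat.sub_add_cancel hkd
      have heq : d₁ + (b - n) * d₂ = b * (d₂ - k) + r := by
        have h5 : b * (d₂ - k) + b * k = b * d₂ := by
          rw [← Nat.mul_add, h2]
        have h6 : k * b = b * k := mul_comm _ _
        linarith
      refine ⟨hd₂b, ?_⟩
      rw [heq, Nat.mul_add_mod, Nat.mod_eq_of_lt (by omega)]
      omega
  rw [key]
  have mono : ∀ k1 k2 : ℕ, k1 < k2 →
      (d₁ + k1 * b) / n < (d₁ + k2 * b) / n := by
    intro k1 k2 h
    have h1 : d₁ + k1 * b + n ≤ d₁ + k2 * b := by nlinarith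
    calc (d₁ + k1 * b) / n < (d₁ + k1 * b) / n + 1 := Nat.lt_succ_self _
      _ = (d₁ + k1 * b + n) / n := (Nat.add_div_right _ hn0).symm
      _ ≤ (d₁ + k2 * b) / n := Nat.div_le_div_right h1
  rw [Finset.card_image_of_injOn, Finset.card_range]
  intro k1 _ k2 _ he
  rcases lt_trichotomy k1 k2 with h | h | h
  · exact absurd he (mono k1 k2 h).ne
  · exact h
  · exact absurd he.symm (mono k2 k1 h).ne
end

section
/- Suppose (d_k, ..., d_0)_b is an (n,b,σ)-permutiple, and suppose π_1, τ_1, π_2, τ_2 are permutations of {0, 1, ..., k} such that (d_{π_1(k)}, ..., d_{π_1(0)})_b is an (n,b,τ_1)-permutiple, (d_{π_2(k)}, ..., d_{π_2(0)})_b is an (n,b,τ_2)-permutiple, and π_1 τ_1 π_1^{-1} = π_2 τ_2 π_2^{-1}. Then the two edge sets coincide: { (d_{π_1(j)}, d_{π_1(τ_1(j))}) : 0 ≤ j ≤ k } = { (d_{π_2(j)}, d_{π_2(τ_2(j))}) : 0 ≤ j ≤ k } as sets of ordered pairs. -/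
lemma range_edges (k : ℕ) (d : Fin (k + 1) → ℕ) (π τ : Equiv.Perm (Fin (k + 1))) :
    (Set.range fun j : Fin (k + 1) => (d (π j), d (π (τ j))))
      = Set.range fun i : Fin (k + 1) => (d i, d ((π * τ * π⁻¹) i)) := by
  have : (fun j : Fin (k + 1) => (d (π j), d (π (τ j))))
      = (fun i : Fin (k + 1) => (d i, d ((π * τ * π⁻¹) i))) ∘ π := by
    funext j; simp [Equiv.Perm.mul_apply]
  rw [this, Set.range_comp, Equiv.range_eq_univ, Set.image_univ]

theorem conjugate_permutiples_same_edges
    (n b k : ℕ) (hn : 1 < n) (hnb : n < b)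
    (d : Fin (k + 1) → ℕ) (hd : ∀ j, d j < b)
    (σ π₁ τ₁ π₂ τ₂ : Equiv.Perm (Fin (k + 1)))
    (hσ : ∑ j : Fin (k + 1), d j * b ^ (j : ℕ)
      = n * ∑ j : Fin (k + 1), d (σ j) * b ^ (j : ℕ))
    (h₁ : ∑ j : Fin (k + 1), d (π₁ j) * b ^ (j : ℕ)
      = n * ∑ j : Fin (k + 1), d (π₁ (τ₁ j)) * b ^ (j : ℕ))
    (h₂ : ∑ j : Fin (k + 1), d (π₂ j) * b ^ (j : ℕ)
      = n * ∑ j : Fin (k + 1), d (π₂ (τ₂ j)) * b ^ (j : ℕ))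
    (hconj : π₁ * τ₁ * π₁⁻¹ = π₂ * τ₂ * π₂⁻¹) :
    (Set.range fun j : Fin (k + 1) => (d (π₁ j), d (π₁ (τ₁ j))))
      = Set.range fun j : Fin (k + 1) => (d (π₂ j), d (π₂ (τ₂ j))) := by
  rw [range_edges, range_edges, hconj]
end

section
/- For every (n,b,σ)-permutiple (d_k, ..., d_0)_b there exists a cycle-preserving permutation σ̂ of {0, 1, ..., k} such that d_{σ̂(j)} = d_{σ(j)} for all 0 ≤ j ≤ k; in particular (d_k, ..., d_0)_b = n·(d_{σ̂(k)}, ..., d_{σ̂(0)})_b. Here σ̂ is cycle-preserving means: for every index j, if m ≥ 1 is the least natural number with σ̂^m(j) = j, then the digits d_j, d_{σ̂(j)}, ..., d_{σ̂^{m-1}(j)} are pairwise distinct. -/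
/-- A permutation `σ` of the index set is cycle-preserving for the digit sequence `d` if
within every orbit of `σ` the corresponding digits are pairwise distinct: for every index
`j`, letting `m ≥ 1` be the least natural number with `σ^m j = j`, the digits
`d j, d (σ j), ..., d (σ^(m-1) j)` are pairwise distinct. -/
def CyclePreserving {k : ℕ} (d : Fin (k + 1) → ℕ) (σ : Equiv.Perm (Fin (k + 1))) : Prop :=
  ∀ j : Fin (k + 1), ∀ a < Function.minimalPeriod σ j, ∀ c < Function.minimalPeriod σ j,
    a ≠ c → d ((σ ^ a) j) ≠ d ((σ ^ c) j)

open Equiv Equiv.Perm Function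

/-- Orbits of `swap x y * τ` are contained in orbits of `τ`, when `x` and `y` are in the
same orbit of `τ`. -/
lemma sameCycle_of_swap_mul {α : Type*} [Fintype α] [DecidableEq α]
    {τ : Perm α} {x y a b : α} (hxy : τ.SameCycle x y)
    (h : (swap x y * τ).SameCycle a b) : τ.SameCycle a b := by
  obtain ⟨i, _, hi⟩ := h.exists_pow_eq'
  subst hi
  clear * - hxy
  induction i with
  | zero => simpa using SameCycle.refl τ a
  | succ i ih =>
    rw [pow_succ', Perm.mul_apply]
    set c := ((swap x y * τ) ^ i) a with hc
    refine ih.trans ?_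
    rw [Perm.mul_apply]
    have hstep : τ.SameCycle c (τ c) := ⟨1, by simp⟩
    rcases eq_or_ne (τ c) x with h1 | h1
    · rw [h1, swap_apply_left]
      exact (h1 ▸ hstep).trans hxy
    rcases eq_or_ne (τ c) y with h2 | h2
    · rw [h2, swap_apply_right]
      exact (h2 ▸ hstep).trans hxy.symm
    · rw [swap_apply_of_ne_of_ne h1 h2]
      exact hstep

/-- Multiplying by `swap x y` separates `x` and `y` into different orbits. -/
lemma not_sameCycle_swap_mul {α : Type*} [Fintype α] [DecidableEq α]
    {τ : Perm α} {x y : α} (hxy : τ.SameCycle x y) (hne : x ≠ y) :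
    ¬ (swap x y * τ).SameCycle x y := by
  obtain ⟨i0, hi0pos, _, hi0⟩ := hxy.exists_pow_eq''
  have hP : ∃ i, 0 < i ∧ (τ ^ i) x = y := ⟨i0, hi0pos, hi0⟩
  set m := Nat.find hP with hm
  have hmpos : 0 < m := (Nat.find_spec hP).1
  have hmy : (τ ^ m) x = y := (Nat.find_spec hP).2
  have hmin : ∀ i, i < m → ¬(0 < i ∧ (τ ^ i) x = y) := fun i hi => Nat.find_min hP hi
  set S : Set α := {z | ∃ j < m, (τ ^ j) x = z} with hS
  have hyS : y ∉ S := by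
    rintro ⟨j, hj, hjy⟩
    rcases Nat.eq_zero_or_pos j with rfl | hjpos
    · exact hne (by simpa using hjy)
    · exact hmin j hj ⟨hjpos, hjy⟩
  have hclosed : ∀ z ∈ S, (swap x y * τ) z ∈ S := by
    rintro z ⟨j, hj, rfl⟩
    rw [Perm.mul_apply, ← Perm.mul_apply τ, ← pow_succ']
    rcases eq_or_lt_of_le (Nat.succ_le_of_lt hj) with hjm | hjm
    · have hjm' : j + 1 = m := hjm
      rw [hjm', hmy, swap_apply_right]
      exact ⟨0, hmpos, by simp⟩
    · have hjm' : j + 1 < m := hjm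
      have h2 : (τ ^ (j + 1)) x ≠ y := fun hcon =>
        hmin (j + 1) hjm' ⟨Nat.succ_pos _, hcon⟩
      have h1 : (τ ^ (j + 1)) x ≠ x := by
        intro hcon
        have hkey : (τ ^ (m - (j + 1))) x = y := by
          have h5 : m - (j + 1) + (j + 1) = m := by omega
          calc (τ ^ (m - (j + 1))) x = (τ ^ (m - (j + 1))) ((τ ^ (j + 1)) x) := by rw [hcon]
            _ = (τ ^ (m - (j + 1) + (j + 1))) x := by rw [← Perm.mul_apply, ← pow_add]
            _ = y := by rw [h5, hmy]
        exact hmin (m - (j + 1)) (by omega) ⟨by omega, hkey⟩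
      rw [swap_apply_of_ne_of_ne h1 h2]
      exact ⟨j + 1, hjm', rfl⟩
  intro hcon
  obtain ⟨i, _, hi⟩ := hcon.exists_pow_eq'
  have hall : ∀ i : ℕ, ((swap x y * τ) ^ i) x ∈ S := by
    intro i
    induction i with
    | zero => exact ⟨0, hmpos, rfl⟩
    | succ i ih => rw [pow_succ', Perm.mul_apply]; exact hclosed _ ih
  exact hyS (hi ▸ hall i)

theorem exists_cycle_preserving_permutation
    (n b k : ℕ) (hn : 1 < n) (hnb : n < b)
    (d : Fin (k + 1) → ℕ) (hd : ∀ j, d j < b)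
    (σ : Equiv.Perm (Fin (k + 1)))
    (hperm : ∑ j : Fin (k + 1), d j * b ^ (j : ℕ)
      = n * ∑ j : Fin (k + 1), d (σ j) * b ^ (j : ℕ)) :
    ∃ σ' : Equiv.Perm (Fin (k + 1)), CyclePreserving d σ' ∧
      (∀ j, d (σ' j) = d (σ j)) ∧
      ∑ j : Fin (k + 1), d j * b ^ (j : ℕ)
        = n * ∑ j : Fin (k + 1), d (σ' j) * b ^ (j : ℕ) := by
  classical
  set S : Finset (Perm (Fin (k + 1))) :=
    Finset.univ.filter (fun τ => ∀ j, d (τ j) = d (σ j)) with hSdef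
  have hσS : σ ∈ S := Finset.mem_filter.mpr ⟨Finset.mem_univ _, fun j => rfl⟩
  set F : Perm (Fin (k + 1)) → ℕ := fun τ =>
    (Finset.univ.filter
      (fun p : Fin (k + 1) × Fin (k + 1) => p.1 ≠ p.2 ∧ τ.SameCycle p.1 p.2)).card with hF
  obtain ⟨τ, hτS, hτmin⟩ := S.exists_min_image F ⟨σ, hσS⟩
  have hτd : ∀ j, d (τ j) = d (σ j) := (Finset.mem_filter.mp hτS).2
  refine ⟨τ, ?_, hτd, ?_⟩
  · -- cycle preserving
    intro j a ha c hc hac hdeq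
    set x := (τ ^ a) j with hx
    set y := (τ ^ c) j with hy
    have hne : x ≠ y := by
      have hinj := Function.iterate_injOn_Iio_minimalPeriod (f := ⇑τ) (x := j)
      intro hcon
      exact hac (hinj (Set.mem_Iio.mpr ha) (Set.mem_Iio.mpr hc) hcon)
    have h1 : τ.SameCycle j x := ⟨(a : ℤ), by simp [zpow_natCast, hx]⟩
    have h2 : τ.SameCycle j y := ⟨(c : ℤ), by simp [zpow_natCast, hy]⟩
    have hsc : τ.SameCycle x y := h1.symm.trans h2
    set τ' := Equiv.swap x y * τ with hτ'
    have hτ'd : ∀ i, d (τ' i) = d (σ i) := by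
      intro i
      rw [hτ', Perm.mul_apply, ← hτd i]
      rcases eq_or_ne (τ i) x with h1' | h1'
      · rw [h1', swap_apply_left]; exact hdeq.symm
      rcases eq_or_ne (τ i) y with h2' | h2'
      · rw [h2', swap_apply_right]; exact hdeq
      · rw [swap_apply_of_ne_of_ne h1' h2']
    have hτ'S : τ' ∈ S := Finset.mem_filter.mpr ⟨Finset.mem_univ _, hτ'd⟩
    have hlt : F τ' < F τ := by
      apply Finset.card_lt_card
      constructor
      · intro p hp
        simp only [Finset.mem_filter, Finset.mem_univ, true_and] at hp ⊢
        exact ⟨hp.1, sameCycle_of_swap_mul hsc hp.2⟩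
      · intro hsub
        have hmem := hsub (Finset.mem_filter.mpr ⟨Finset.mem_univ (x, y), hne, hsc⟩)
        simp only [Finset.mem_filter, Finset.mem_univ, true_and] at hmem
        exact not_sameCycle_swap_mul hsc hne hmem.2
    exact absurd (hτmin τ' hτ'S) (by omega)
  · -- the sum identity
    rw [hperm]
    congr 1
    exact Finset.sum_congr rfl fun j _ => by rw [hτd j]
end

section
/- Let p = (d_k, ..., d_0)_b be an (n,b,σ)-permutiple and let G_p be the directed graph on vertex set {0, 1, ..., b−1} with edge set E_p = { (d_j, d_{σ(j)}) : 0 ≤ j ≤ k }. Then (i) every edge of G_p is an edge of the (n,b)-mother graph M, i.e., (d_j + (b − n)·d_{σ(j)}) mod b ≤ n − 1 for all j; and (ii) every vertex of G_p having positive outdegree lies on a directed cycle of G_p (a closed directed walk in E_p whose vertices are pairwise distinct). Hence G_p is a union of cycles of M. -/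
/-- From any closed walk through `v` one can extract a simple cycle through `v`. -/
lemma cycle_extract (E : ℕ → ℕ → Prop) (v : ℕ) :
    ∀ m : ℕ, 0 < m → ∀ w : ℕ → ℕ, w 0 = v → (∀ a < m, E (w a) (w ((a + 1) % m))) →
    ∃ m' : ℕ, 0 < m' ∧ ∃ w' : ℕ → ℕ,
      (∀ a < m', ∀ c < m', a ≠ c → w' a ≠ w' c) ∧
      (∀ a < m', E (w' a) (w' ((a + 1) % m'))) ∧
      (∃ a < m', w' a = v) := by
  intro m
  induction m using Nat.strong_induction_on with
  | _ m IH =>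
    intro hm w hw0 hwalk
    by_cases hdist : ∀ a < m, ∀ c < m, a ≠ c → w a ≠ w c
    · exact ⟨m, hm, w, hdist, hwalk, 0, hm, hw0⟩
    · push_neg at hdist
      obtain ⟨a, ha, c, hc, hac, heq⟩ := hdist
      have key : ∀ a c : ℕ, a < c → c < m → w a = w c →
          ∃ m' : ℕ, 0 < m' ∧ ∃ w' : ℕ → ℕ,
            (∀ a < m', ∀ c < m', a ≠ c → w' a ≠ w' c) ∧
            (∀ a < m', E (w' a) (w' ((a + 1) % m'))) ∧
            (∃ a < m', w' a = v) := by
        clear heq hac hc ha a c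
        intro a c hlt hcm heq
        set δ := c - a with hδ
        have hδpos : 0 < δ := by omega
        have hca : c = a + δ := by omega
        set m' := m - δ with hm'
        have hm'a : a < m' := by omega
        have hm'pos : 0 < m' := by omega
        have hm'lt : m' < m := by omega
        set w' : ℕ → ℕ := fun i => if i ≤ a then w i else w (i + δ) with hw'
        have hw'0 : w' 0 = v := by simp [hw', hw0]
        have hwalk' : ∀ i < m', E (w' i) (w' ((i + 1) % m')) := by
          intro i hi
          rcases lt_trichotomy i a with h | h | h
          · have h1 : (i + 1) % m' = i + 1 := Nat.mod_eq_of_lt (by omega)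
            have h2 : (i + 1) % m = i + 1 := Nat.mod_eq_of_lt (by omega)
            have := hwalk i (by omega)
            rw [h2] at this
            simpa [hw', h1, Nat.le_of_lt h, h.le, Nat.succ_le_of_lt h] using this
          · subst h
            by_cases h3 : i + 1 < m'
            · have h1 : (i + 1) % m' = i + 1 := Nat.mod_eq_of_lt h3
              have h4 : c + 1 < m := by omega
              have h2 : (c + 1) % m = c + 1 := Nat.mod_eq_of_lt h4
              have := hwalk c hcm
              rw [h2] at this
              have e1 : w' i = w c := by simp [hw', heq]
              have e2 : w' ((i + 1) % m') = w (c + 1) := by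
                rw [h1]; simp only [hw']
                rw [if_neg (by omega)]
                congr 1; omega
              rw [e1, e2]; exact this
            · have h4 : i + 1 = m' := by omega
              have h5 : c + 1 = m := by omega
              have h1 : (i + 1) % m' = 0 := by rw [h4]; simp
              have := hwalk c hcm
              have h2 : (c + 1) % m = 0 := by rw [h5]; simp
              rw [h2] at this
              have e1 : w' i = w c := by simp [hw', heq]
              rw [e1, h1, hw'0, ← hw0]; exact this
          · by_cases h3 : i + 1 < m'
            · have h1 : (i + 1) % m' = i + 1 := Nat.mod_eq_of_lt h3
              have h4 : i + δ + 1 < m := by omega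
              have h2 : (i + δ + 1) % m = i + δ + 1 := Nat.mod_eq_of_lt h4
              have := hwalk (i + δ) (by omega)
              rw [h2] at this
              have e1 : w' i = w (i + δ) := by simp only [hw']; rw [if_neg (by omega)]
              have e2 : w' ((i + 1) % m') = w (i + δ + 1) := by
                rw [h1]; simp only [hw']; rw [if_neg (by omega)]; congr 1; omega
              rw [e1, e2]; exact this
            · have h4 : i + 1 = m' := by omega
              have h5 : i + δ + 1 = m := by omega
              have h1 : (i + 1) % m' = 0 := by rw [h4]; simp
              have := hwalk (i + δ) (by omega)
              have h2 : (i + δ + 1) % m = 0 := by rw [h5]; simp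
              rw [h2] at this
              have e1 : w' i = w (i + δ) := by simp only [hw']; rw [if_neg (by omega)]
              rw [e1, h1, hw'0, ← hw0]; exact this
        exact IH m' hm'lt hm'pos w' hw'0 hwalk'
      rcases Nat.lt_or_ge a c with h | h
      · exact key a c h hc heq
      · exact key c a (by omega) ha heq.symm

lemma carry_bound (n b k : ℕ) (hn : 1 < n) (hnb : n < b)
    (d : Fin (k + 1) → ℕ) (hd : ∀ j, d j < b)
    (σ : Equiv.Perm (Fin (k + 1)))
    (hperm : ∑ j : Fin (k + 1), d j * b ^ (j : ℕ)
      = n * ∑ j : Fin (k + 1), d (σ j) * b ^ (j : ℕ)) :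
    ∀ j : Fin (k + 1), (d j + (b - n) * d (σ j)) % b ≤ n - 1 := by
  have hb0 : (0:ℤ) < b := by exact_mod_cast (by omega : 0 < b)
  set D : ℕ → ℤ := fun i => if h : i < k + 1 then (d ⟨i, h⟩ : ℤ) else 0 with hD
  set Dσ : ℕ → ℤ := fun i => if h : i < k + 1 then (d (σ ⟨i, h⟩) : ℤ) else 0 with hDσ
  have hDb : ∀ i, 0 ≤ D i ∧ D i ≤ (b:ℤ) - 1 := by
    intro i; simp only [hD]; split
    · refine ⟨by positivity, ?_⟩
      have : ((d ⟨i, by assumption⟩ : ℕ) : ℤ) < b := by exact_mod_cast hd _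
      linarith
    · exact ⟨le_refl 0, by linarith⟩
  have hDσb : ∀ i, 0 ≤ Dσ i ∧ Dσ i ≤ (b:ℤ) - 1 := by
    intro i; simp only [hDσ]; split
    · refine ⟨by positivity, ?_⟩
      have : ((d (σ ⟨i, by assumption⟩) : ℕ) : ℤ) < b := by exact_mod_cast hd _
      linarith
    · exact ⟨le_refl 0, by linarith⟩
  set T : ℕ → ℤ := fun j =>
    (n : ℤ) * ∑ i ∈ Finset.range j, Dσ i * (b:ℤ) ^ i - ∑ i ∈ Finset.range j, D i * (b:ℤ) ^ i
    with hT
  have hT0 : T 0 = 0 := by simp [hT]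
  have hTk : T (k + 1) = 0 := by
    have h1 : ∑ i ∈ Finset.range (k + 1), D i * (b:ℤ) ^ i
        = ∑ j : Fin (k + 1), (d j : ℤ) * (b:ℤ) ^ (j : ℕ) := by
      rw [← Fin.sum_univ_eq_sum_range (fun i => D i * (b:ℤ) ^ i)]
      refine Finset.sum_congr rfl fun i _ => ?_
      simp [hD, i.isLt, Nat.not_lt.mpr (Nat.lt_succ_iff.mp i.isLt)]
    have h2 : ∑ i ∈ Finset.range (k + 1), Dσ i * (b:ℤ) ^ i
        = ∑ j : Fin (k + 1), (d (σ j) : ℤ) * (b:ℤ) ^ (j : ℕ) := by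
      rw [← Fin.sum_univ_eq_sum_range (fun i => Dσ i * (b:ℤ) ^ i)]
      refine Finset.sum_congr rfl fun i _ => ?_
      simp [hDσ, i.isLt, Nat.not_lt.mpr (Nat.lt_succ_iff.mp i.isLt)]
    have hpz := congrArg (Nat.cast : ℕ → ℤ) hperm
    push_cast at hpz
    simp only [hT]
    rw [h1, h2]
    linarith
  have hTrec : ∀ j, T (j + 1) = T j + ((n : ℤ) * Dσ j - D j) * (b:ℤ) ^ j := by
    intro j
    simp only [hT, Finset.sum_range_succ]
    ring
  have hTdvd : ∀ j ≤ k + 1, (b:ℤ) ^ j ∣ T j := by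
    intro j hj
    have : T (k + 1) - T j = ∑ i ∈ Finset.Ico j (k + 1), ((n : ℤ) * Dσ i - D i) * (b:ℤ) ^ i := by
      simp only [hT]
      rw [Finset.sum_Ico_eq_sub _ hj]
      simp only [sub_mul]
      rw [Finset.sum_sub_distrib, Finset.sum_sub_distrib]
      simp only [mul_assoc]
      rw [← Finset.mul_sum, ← Finset.mul_sum]
    have hdvd : (b:ℤ) ^ j ∣ ∑ i ∈ Finset.Ico j (k + 1), ((n : ℤ) * Dσ i - D i) * (b:ℤ) ^ i := by
      refine Finset.dvd_sum fun i hi => ?_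
      exact Dvd.dvd.mul_left (pow_dvd_pow _ (Finset.mem_Ico.mp hi).1) _
    rw [hTk] at this
    have : T j = -∑ i ∈ Finset.Ico j (k + 1), ((n : ℤ) * Dσ i - D i) * (b:ℤ) ^ i := by linarith
    rw [this]
    exact dvd_neg.mpr hdvd
  set c : ℕ → ℤ := fun j => T j / (b:ℤ) ^ j with hc
  have hcT : ∀ j ≤ k + 1, c j * (b:ℤ) ^ j = T j := fun j hj =>
    Int.ediv_mul_cancel (hTdvd j hj)
  have hrec : ∀ j < k + 1, c (j + 1) * b = c j + ((n : ℤ) * Dσ j - D j) := by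
    intro j hj
    have h1 : c (j + 1) * (b:ℤ) ^ (j + 1) = T (j + 1) := hcT _ (by omega)
    have h2 : c j * (b:ℤ) ^ j = T j := hcT _ (by omega)
    have h3 := hTrec j
    have h4 : (c (j + 1) * b) * (b:ℤ) ^ j = (c j + ((n : ℤ) * Dσ j - D j)) * (b:ℤ) ^ j := by
      linear_combination h1 + h3 - h2
    exact mul_right_cancel₀ (by positivity) h4
  have hcb : ∀ j ≤ k + 1, 0 ≤ c j ∧ c j ≤ (n : ℤ) - 1 := by
    intro j
    induction j with
    | zero =>
      intro _
      have : c 0 = 0 := by simp [hc, hT0]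
      rw [this]
      constructor
      · exact le_refl 0
      · have : (1:ℤ) < n := by exact_mod_cast hn
        linarith
    | succ j ih =>
      intro hj
      have hjlt : j < k + 1 := by omega
      obtain ⟨h0, h1⟩ := ih (by omega)
      have hr := hrec j hjlt
      obtain ⟨hd0, hd1⟩ := hDb j
      obtain ⟨hs0, hs1⟩ := hDσb j
      have hnb' : (n:ℤ) < b := by exact_mod_cast hnb
      constructor
      · by_contra hneg
        push_neg at hneg
        have : c (j + 1) ≤ -1 := by omega
        nlinarith
      · by_contra hbig
        push_neg at hbig
        have : (n:ℤ) ≤ c (j + 1) := by omega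
        nlinarith
  intro j
  have hjlt : (j : ℕ) < k + 1 := j.isLt
  have hr := hrec j hjlt
  have hDj : D (j : ℕ) = (d j : ℤ) := by simp [hD, hjlt, Nat.not_lt.mpr (Nat.lt_succ_iff.mp hjlt)]
  have hDσj : Dσ (j : ℕ) = (d (σ j) : ℤ) := by simp [hDσ, hjlt, Nat.not_lt.mpr (Nat.lt_succ_iff.mp hjlt)]
  rw [hDj, hDσj] at hr
  obtain ⟨hc0, hc1⟩ := hcb (j : ℕ) (by omega)
  set X : ℕ := d j + (b - n) * d (σ j) with hX
  have hXcast : (X : ℤ) = (d j : ℤ) + ((b:ℤ) - n) * (d (σ j) : ℤ) := by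
    rw [hX]
    push_cast [Nat.cast_sub hnb.le]
    ring
  have hXeq : (X : ℤ) = c (j : ℕ) + ((d (σ j) : ℤ) - c ((j : ℕ) + 1)) * b := by
    rw [hXcast]; linarith
  have hnb' : (n:ℤ) < b := by exact_mod_cast hnb
  have hmod : (X : ℤ) % b = c (j : ℕ) := by
    rw [hXeq, Int.add_mul_emod_self_right]
    exact Int.emod_eq_of_lt hc0 (by linarith)
  have hfin : ((X % b : ℕ) : ℤ) ≤ ((n - 1 : ℕ) : ℤ) := by
    rw [Int.natCast_mod, hmod]
    rw [Nat.cast_sub (by omega : 1 ≤ n)]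
    simpa using hc1
  exact_mod_cast hfin

theorem permutiple_graph_union_of_cycles
    (n b k : ℕ) (hn : 1 < n) (hnb : n < b)
    (d : Fin (k + 1) → ℕ) (hd : ∀ j, d j < b)
    (σ : Equiv.Perm (Fin (k + 1)))
    (hperm : ∑ j : Fin (k + 1), d j * b ^ (j : ℕ)
      = n * ∑ j : Fin (k + 1), d (σ j) * b ^ (j : ℕ)) :
    -- (i) every edge of G_p is an edge of the (n,b)-mother graph
    (∀ j : Fin (k + 1), (d j + (b - n) * d (σ j)) % b ≤ n - 1) ∧
    -- (ii) every vertex of G_p with positive outdegree lies on a directed cycle of G_p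
    (∀ v : ℕ, (∃ j : Fin (k + 1), d j = v) →
      ∃ m : ℕ, 0 < m ∧ ∃ w : ℕ → ℕ,
        -- the vertices of the closed walk are pairwise distinct
        (∀ a < m, ∀ c < m, a ≠ c → w a ≠ w c) ∧
        -- each consecutive (cyclic) pair of vertices is an edge of G_p
        (∀ a < m, ∃ j : Fin (k + 1), (d j, d (σ j)) = (w a, w ((a + 1) % m))) ∧
        -- the cycle passes through v
        (∃ a < m, w a = v)) := by
  constructor
  · exact carry_bound n b k hn hnb d hd σ hperm
  · intro v hv
    obtain ⟨j0, hj0⟩ := hv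
    set E : ℕ → ℕ → Prop := fun x y => ∃ j : Fin (k + 1), (d j, d (σ j)) = (x, y) with hE
    set m : ℕ := orderOf σ with hm
    have hmpos : 0 < m := orderOf_pos σ
    set w : ℕ → ℕ := fun a => d ((σ ^ a) j0) with hw
    have hw0 : w 0 = v := by simp [hw, hj0]
    have hwalk : ∀ a < m, E (w a) (w ((a + 1) % m)) := by
      intro a ha
      refine ⟨(σ ^ a) j0, ?_⟩
      have h1 : σ ((σ ^ a) j0) = (σ ^ (a + 1)) j0 := by
        rw [pow_succ']
        rfl
      have h2 : (σ ^ ((a + 1) % m)) j0 = (σ ^ (a + 1)) j0 := by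
        rw [hm, pow_mod_orderOf]
      simp [hw, h1, h2]
    exact cycle_extract E v m hmpos w hw0 hwalk
end
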